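/- For every k ≥ 1 there holds the set equality curl[𝒫^{k-1}(ℝ³)]³ = {Δu : u a vector field with components in 𝒫^k(ℝ³) with div u = 0}; in particular, for every vector field v₁ with components in 𝒫^{k-1}(ℝ³) there exists a vector field u with components in 𝒫^k(ℝ³) such that div u = 0 and Δu = curl v₁, and conversely Δu of any divergence-free u with components in 𝒫^k(ℝ³) is the curl of a vector field with components in 𝒫^{k-1}(ℝ³). -/

import Mathlib

open MvPolynomial

/-- The formal Laplacian `Δp = ∑ⱼ ∂ⱼ∂ⱼp` of a polynomial in `d` variables. -/
noncomputable def lap {d : ℕ} (p : MvPolynomial (Fin d) ℝ) : MvPolynomial (Fin d) ℝ :=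
  ∑ j, pderiv j (pderiv j p)

/-- The formal divergence `div v = ∑ᵢ ∂ᵢvᵢ` of a polynomial vector field. -/
noncomputable def pdiv {d : ℕ} (v : Fin d → MvPolynomial (Fin d) ℝ) : MvPolynomial (Fin d) ℝ :=
  ∑ i, pderiv i (v i)

/-- The formal curl of a polynomial vector field on `ℝ³`:
`curl v = (∂₂v₃ − ∂₃v₂, ∂₃v₁ − ∂₁v₃, ∂₁v₂ − ∂₂v₁)` (0-based indices). -/
noncomputable def curl3 (v : Fin 3 → MvPolynomial (Fin 3) ℝ) : Fin 3 → MvPolynomial (Fin 3) ℝ :=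
  ![pderiv 1 (v 2) - pderiv 2 (v 1),
    pderiv 2 (v 0) - pderiv 0 (v 2),
    pderiv 0 (v 1) - pderiv 1 (v 0)]

lemma curl3_apply_zero (v : Fin 3 → MvPolynomial (Fin 3) ℝ) :
    curl3 v 0 = pderiv 1 (v 2) - pderiv 2 (v 1) := rfl

lemma curl3_apply_one (v : Fin 3 → MvPolynomial (Fin 3) ℝ) :
    curl3 v 1 = pderiv 2 (v 0) - pderiv 0 (v 2) := rfl

lemma curl3_apply_two (v : Fin 3 → MvPolynomial (Fin 3) ℝ) :
    curl3 v 2 = pderiv 0 (v 1) - pderiv 1 (v 0) := rfl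


lemma pderiv_comm' {d : ℕ} (i j : Fin d) (p : MvPolynomial (Fin d) ℝ) :
    pderiv i (pderiv j p) = pderiv j (pderiv i p) := by
  induction p using MvPolynomial.induction_on' with
  | add p q hp hq => simp [map_add, hp, hq]
  | monomial s a =>
    rcases eq_or_ne i j with rfl | hij
    · rfl
    · have h1 : (s - Finsupp.single j 1 : Fin d →₀ ℕ) i = s i := by
        rw [Finsupp.tsub_apply, Finsupp.single_eq_of_ne' hij.symm, Nat.sub_zero]
      have h2 : (s - Finsupp.single i 1 : Fin d →₀ ℕ) j = s j := by
        rw [Finsupp.tsub_apply, Finsupp.single_eq_of_ne' hij, Nat.sub_zero]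
      rw [pderiv_monomial, pderiv_monomial, pderiv_monomial, pderiv_monomial, h1, h2,
        tsub_tsub, tsub_tsub, add_comm (Finsupp.single j 1)]
      congr 1
      ring

lemma totalDegree_pderiv_le {d : ℕ} (i : Fin d) (p : MvPolynomial (Fin d) ℝ) :
    (pderiv i p).totalDegree ≤ p.totalDegree - 1 := by
  conv_lhs => rw [p.as_sum]
  rw [map_sum]
  refine (totalDegree_finset_sum _ _).trans (Finset.sup_le fun m hm => ?_)
  rw [pderiv_monomial]
  by_cases h : m i = 0
  · simp [h]
  · refine (totalDegree_monomial_le _ _).trans ?_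
    have hle : Finsupp.single i 1 ≤ m := by
      rw [Finsupp.single_le_iff]; omega
    have hm' : (m - Finsupp.single i 1) + Finsupp.single i 1 = m := tsub_add_cancel_of_le hle
    have hsum : (m - Finsupp.single i 1).sum (fun _ => id) + 1 = m.sum (fun _ => id) := by
      conv_rhs => rw [← hm']
      rw [Finsupp.sum_add_index' (fun _ => rfl) (fun _ _ _ => rfl), Finsupp.sum_single_index rfl]
      rfl
    have h2 : m.sum (fun _ => id) ≤ p.totalDegree := le_totalDegree hm
    omega

lemma pderiv00_monomial (m : Fin 3 →₀ ℕ) (c : ℝ) :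
    pderiv 0 (pderiv 0 (monomial (m + Finsupp.single 0 2) c)) =
      monomial m (c * (((m 0 : ℝ) + 2) * ((m 0 : ℝ) + 1))) := by
  have hs : Finsupp.single (0 : Fin 3) 2 = Finsupp.single 0 1 + Finsupp.single 0 1 := by
    rw [← Finsupp.single_add]
  have h1 : (m + Finsupp.single 0 2 : Fin 3 →₀ ℕ) - Finsupp.single 0 1
      = m + Finsupp.single 0 1 := by
    rw [hs, ← add_assoc, add_tsub_cancel_right]
  have h2 : ((m + Finsupp.single 0 2 : Fin 3 →₀ ℕ)) 0 = m 0 + 2 := by simp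
  have h3 : (m + Finsupp.single 0 1 : Fin 3 →₀ ℕ) - Finsupp.single 0 1 = m :=
    add_tsub_cancel_right _ _
  have h4 : ((m + Finsupp.single 0 1 : Fin 3 →₀ ℕ)) 0 = m 0 + 1 := by simp
  rw [pderiv_monomial, h1, h2, pderiv_monomial, h3, h4]
  congr 1
  push_cast
  ring

lemma pderivjj_monomial (j : Fin 3) (hj : j ≠ 0) (m : Fin 3 →₀ ℕ) (c : ℝ) :
    pderiv j (pderiv j (monomial (m + Finsupp.single 0 2) c)) =
      monomial (m + Finsupp.single 0 2 - Finsupp.single j 1 - Finsupp.single j 1)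
        (c * (m j : ℝ) * ((m j - 1 : ℕ) : ℝ)) := by
  have h1 : ((m + Finsupp.single 0 2 : Fin 3 →₀ ℕ)) j = m j := by
    rw [Finsupp.add_apply, Finsupp.single_eq_of_ne' hj.symm, Nat.add_zero]
  have h2 : ((m + Finsupp.single 0 2 - Finsupp.single j 1 : Fin 3 →₀ ℕ)) j = m j - 1 := by
    rw [Finsupp.tsub_apply, h1, Finsupp.single_eq_same]
  rw [pderiv_monomial, h1, pderiv_monomial, h2]

lemma lap_sub {d : ℕ} (p q : MvPolynomial (Fin d) ℝ) : lap (p - q) = lap p - lap q := by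
  simp [lap, map_sub, Finset.sum_sub_distrib]

lemma lap_pderiv {d : ℕ} (i : Fin d) (p : MvPolynomial (Fin d) ℝ) :
    lap (pderiv i p) = pderiv i (lap p) := by
  rw [lap, lap, map_sum]
  refine Finset.sum_congr rfl fun j _ => ?_
  rw [pderiv_comm' j i p, pderiv_comm' j i (pderiv j p)]

lemma lap_solve (n : ℕ) (t : ℕ) : ∀ p : MvPolynomial (Fin 3) ℝ,
    (∀ m ∈ p.support, m 1 + m 2 ≤ t) → p.totalDegree ≤ n →
    ∃ w : MvPolynomial (Fin 3) ℝ, w.totalDegree ≤ n + 2 ∧ lap w = p := by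
  induction t using Nat.strong_induction_on with
  | _ t IH =>
  intro p hsup hdeg
  classical
  set c : (Fin 3 →₀ ℕ) → ℝ := fun m => coeff m p / (((m 0 : ℝ) + 2) * ((m 0 : ℝ) + 1)) with hc
  set w0 : (Fin 3 →₀ ℕ) → MvPolynomial (Fin 3) ℝ :=
    fun m => monomial (m + Finsupp.single 0 2) (c m) with hw0
  set W : MvPolynomial (Fin 3) ℝ := ∑ m ∈ p.support, w0 m with hW
  set r : MvPolynomial (Fin 3) ℝ :=
    ∑ m ∈ p.support, (pderiv 1 (pderiv 1 (w0 m)) + pderiv 2 (pderiv 2 (w0 m))) with hr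
  have hw0deg : ∀ m ∈ p.support, (w0 m).totalDegree ≤ n + 2 := by
    intro m hm
    refine (totalDegree_monomial_le _ _).trans ?_
    have h1 : (m + Finsupp.single 0 2 : Fin 3 →₀ ℕ).sum (fun _ => id)
        = m.sum (fun _ => id) + 2 := by
      rw [Finsupp.sum_add_index' (fun _ => rfl) (fun _ _ _ => rfl),
        Finsupp.sum_single_index rfl]
      rfl
    have h2 : m.sum (fun _ => id) ≤ p.totalDegree := le_totalDegree hm
    omega
  have hWdeg : W.totalDegree ≤ n + 2 :=
    (totalDegree_finset_sum _ _).trans (Finset.sup_le hw0deg)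
  have key : ∀ m ∈ p.support, ∑ j : Fin 3, pderiv j (pderiv j (w0 m)) =
      monomial m (coeff m p)
        + (pderiv 1 (pderiv 1 (w0 m)) + pderiv 2 (pderiv 2 (w0 m))) := by
    intro m hm
    rw [Fin.sum_univ_three]
    have h0 : pderiv 0 (pderiv 0 (w0 m)) = monomial m (coeff m p) := by
      rw [hw0]
      simp only
      rw [pderiv00_monomial]
      congr 1
      rw [hc]
      have hden : (((m 0 : ℝ) + 2) * ((m 0 : ℝ) + 1)) ≠ 0 := by positivity
      field_simp
    rw [h0]
    ring
  have hlapW : lap W = p + r := by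
    rw [hW, lap]
    simp_rw [map_sum]
    rw [Finset.sum_comm, Finset.sum_congr rfl key, Finset.sum_add_distrib,
      support_sum_monomial_coeff, hr]
  have hrdeg : r.totalDegree ≤ n := by
    refine (totalDegree_finset_sum _ _).trans (Finset.sup_le fun m hm => ?_)
    refine (totalDegree_add _ _).trans (max_le ?_ ?_) <;>
    · refine (totalDegree_pderiv_le _ _).trans ?_
      have := (totalDegree_pderiv_le (1:Fin 3) (w0 m)).trans
        (Nat.sub_le_sub_right (hw0deg m hm) 1)
      have := (totalDegree_pderiv_le (2:Fin 3) (w0 m)).trans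
        (Nat.sub_le_sub_right (hw0deg m hm) 1)
      omega
  have hrsup : ∀ m' ∈ r.support, m' 1 + m' 2 + 2 ≤ t := by
    intro m' hm'
    obtain ⟨m, hm, hmem⟩ := Finset.mem_biUnion.mp (support_sum hm')
    have hmt := hsup m hm
    rcases Finset.mem_union.mp (support_add hmem) with h | h
    · rw [hw0] at h
      simp only at h
      rw [pderivjj_monomial 1 (by decide) m (c m), support_monomial] at h
      split_ifs at h with hcoef
      · exact absurd h (Finset.notMem_empty _)
      · have hne : m 1 ≠ 0 ∧ m 1 - 1 ≠ 0 := by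
          constructor <;> intro h0 <;> exact hcoef (by simp [h0])
        have hm1 : 2 ≤ m 1 := by omega
        have hm'eq := Finset.mem_singleton.mp h
        subst hm'eq
        have e1 : (m + Finsupp.single 0 2 - Finsupp.single 1 1 - Finsupp.single 1 1
            : Fin 3 →₀ ℕ) 1 = m 1 - 2 := by
          simp [Finsupp.tsub_apply, Finsupp.single_apply]
          omega
        have e2 : (m + Finsupp.single 0 2 - Finsupp.single 1 1 - Finsupp.single 1 1
            : Fin 3 →₀ ℕ) 2 = m 2 := by
          simp [Finsupp.tsub_apply, Finsupp.single_apply]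
        rw [e1, e2]
        omega
    · rw [hw0] at h
      simp only at h
      rw [pderivjj_monomial 2 (by decide) m (c m), support_monomial] at h
      split_ifs at h with hcoef
      · exact absurd h (Finset.notMem_empty _)
      · have hne : m 2 ≠ 0 ∧ m 2 - 1 ≠ 0 := by
          constructor <;> intro h0 <;> exact hcoef (by simp [h0])
        have hm2 : 2 ≤ m 2 := by omega
        have hm'eq := Finset.mem_singleton.mp h
        subst hm'eq
        have e1 : (m + Finsupp.single 0 2 - Finsupp.single 2 1 - Finsupp.single 2 1
            : Fin 3 →₀ ℕ) 1 = m 1 := by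
          simp [Finsupp.tsub_apply, Finsupp.single_apply]
        have e2 : (m + Finsupp.single 0 2 - Finsupp.single 2 1 - Finsupp.single 2 1
            : Fin 3 →₀ ℕ) 2 = m 2 - 2 := by
          simp [Finsupp.tsub_apply, Finsupp.single_apply]
          omega
        rw [e1, e2]
        omega
  rcases Nat.eq_zero_or_pos t with ht | ht
  · have hr0 : r = 0 := by
      rw [← support_eq_empty, Finset.eq_empty_iff_forall_notMem]
      intro m' hm'
      have := hrsup m' hm'
      omega
    exact ⟨W, hWdeg, by rw [hlapW, hr0, add_zero]⟩
  · obtain ⟨w₁, hw₁deg, hw₁⟩ := IH (t - 1) (by omega) r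
      (fun m' h => by have := hrsup m' h; omega) hrdeg
    refine ⟨W - w₁, ?_, ?_⟩
    · exact (totalDegree_sub _ _).trans (max_le hWdeg hw₁deg)
    · rw [lap_sub, hlapW, hw₁, add_sub_cancel_right]

lemma lap_surj (n : ℕ) (p : MvPolynomial (Fin 3) ℝ) (h : p.totalDegree ≤ n) :
    ∃ w : MvPolynomial (Fin 3) ℝ, w.totalDegree ≤ n + 2 ∧ lap w = p := by
  refine lap_solve n n p (fun m hm => ?_) h
  have h1 : m.sum (fun _ e => e) ≤ n := le_trans (le_totalDegree hm) h
  have h2 : m.sum (fun _ e => e) = m 0 + m 1 + m 2 := by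
    rw [Finsupp.sum_fintype _ _ (fun _ => rfl), Fin.sum_univ_three]
  omega

/-- For every `k ≥ 1`: `curl [𝒫^{k-1}(ℝ³)]³ = {Δu : u ∈ [𝒫ᵏ(ℝ³)]³, div u = 0}`. -/
theorem curl_range_eq_lap_of_divfree (k : ℕ) (hk : 1 ≤ k) :
    {f : Fin 3 → MvPolynomial (Fin 3) ℝ |
        ∃ v₁ : Fin 3 → MvPolynomial (Fin 3) ℝ,
          (∀ i, (v₁ i).totalDegree ≤ k - 1) ∧ f = curl3 v₁} =
      {f : Fin 3 → MvPolynomial (Fin 3) ℝ |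
        ∃ u : Fin 3 → MvPolynomial (Fin 3) ℝ,
          (∀ i, (u i).totalDegree ≤ k) ∧ pdiv u = 0 ∧ f = fun i => lap (u i)} := by
  ext f
  simp only [Set.mem_setOf_eq]
  constructor
  · rintro ⟨v₁, hv, rfl⟩
    choose w hwdeg hwlap using fun i => lap_surj (k - 1) (v₁ i) (hv i)
    have hwdeg' : ∀ i, (w i).totalDegree ≤ k + 1 := by
      intro i; have := hwdeg i; omega
    have hcomp : ∀ i j, (pderiv i (w j)).totalDegree ≤ k := by
      intro i j
      have := (totalDegree_pderiv_le i (w j)).trans (Nat.sub_le_sub_right (hwdeg' j) 1)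
      omega
    refine ⟨curl3 w, ?_, ?_, ?_⟩
    · intro i
      fin_cases i
      · show (curl3 w 0).totalDegree ≤ k
        rw [curl3_apply_zero]
        exact (totalDegree_sub _ _).trans (max_le (hcomp _ _) (hcomp _ _))
      · show (curl3 w 1).totalDegree ≤ k
        rw [curl3_apply_one]
        exact (totalDegree_sub _ _).trans (max_le (hcomp _ _) (hcomp _ _))
      · show (curl3 w 2).totalDegree ≤ k
        rw [curl3_apply_two]
        exact (totalDegree_sub _ _).trans (max_le (hcomp _ _) (hcomp _ _))
    · rw [pdiv, Fin.sum_univ_three, curl3_apply_zero, curl3_apply_one, curl3_apply_two,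
        map_sub, map_sub, map_sub]
      simp only [pderiv_comm' 1 0, pderiv_comm' 2 0, pderiv_comm' 2 1]
      ring
    · funext i
      fin_cases i
      · show curl3 v₁ 0 = lap (curl3 w 0)
        rw [curl3_apply_zero, curl3_apply_zero, ← hwlap, ← hwlap, lap_sub,
          lap_pderiv, lap_pderiv]
      · show curl3 v₁ 1 = lap (curl3 w 1)
        rw [curl3_apply_one, curl3_apply_one, ← hwlap, ← hwlap, lap_sub,
          lap_pderiv, lap_pderiv]
      · show curl3 v₁ 2 = lap (curl3 w 2)
        rw [curl3_apply_two, curl3_apply_two, ← hwlap, ← hwlap, lap_sub,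
          lap_pderiv, lap_pderiv]
  · rintro ⟨u, hu, hdiv, rfl⟩
    have hcomp : ∀ i j, (pderiv i (u j)).totalDegree ≤ k - 1 := by
      intro i j
      exact (totalDegree_pderiv_le i (u j)).trans (Nat.sub_le_sub_right (hu j) 1)
    have hd : pderiv (0 : Fin 3) (u 0) + pderiv 1 (u 1) + pderiv 2 (u 2) = 0 := by
      rw [← Fin.sum_univ_three (fun i => pderiv i (u i))]
      exact hdiv
    refine ⟨fun i => -(curl3 u i), ?_, ?_⟩
    · intro i
      fin_cases i
      · show (-(curl3 u 0)).totalDegree ≤ k - 1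
        rw [totalDegree_neg, curl3_apply_zero]
        exact (totalDegree_sub _ _).trans (max_le (hcomp _ _) (hcomp _ _))
      · show (-(curl3 u 1)).totalDegree ≤ k - 1
        rw [totalDegree_neg, curl3_apply_one]
        exact (totalDegree_sub _ _).trans (max_le (hcomp _ _) (hcomp _ _))
      · show (-(curl3 u 2)).totalDegree ≤ k - 1
        rw [totalDegree_neg, curl3_apply_two]
        exact (totalDegree_sub _ _).trans (max_le (hcomp _ _) (hcomp _ _))
    · funext i
      fin_cases i
      · have h0 := congrArg (pderiv (0 : Fin 3)) hd
        rw [map_add, map_add, map_zero] at h0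
        show lap (u 0) = curl3 (fun i => -(curl3 u i)) 0
        rw [curl3_apply_zero, lap, Fin.sum_univ_three, curl3_apply_one, curl3_apply_two,
          map_neg, map_neg, map_sub, map_sub]
        simp only [pderiv_comm' 1 0, pderiv_comm' 2 0, pderiv_comm' 2 1] at h0 ⊢
        linear_combination h0
      · have h0 := congrArg (pderiv (1 : Fin 3)) hd
        rw [map_add, map_add, map_zero] at h0
        show lap (u 1) = curl3 (fun i => -(curl3 u i)) 1
        rw [curl3_apply_one, lap, Fin.sum_univ_three, curl3_apply_zero, curl3_apply_two,
          map_neg, map_neg, map_sub, map_sub]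
        simp only [pderiv_comm' 1 0, pderiv_comm' 2 0, pderiv_comm' 2 1] at h0 ⊢
        linear_combination h0
      · have h0 := congrArg (pderiv (2 : Fin 3)) hd
        rw [map_add, map_add, map_zero] at h0
        show lap (u 2) = curl3 (fun i => -(curl3 u i)) 2
        rw [curl3_apply_two, lap, Fin.sum_univ_three, curl3_apply_zero, curl3_apply_one,
          map_neg, map_neg, map_sub, map_sub]
        simp only [pderiv_comm' 1 0, pderiv_comm' 2 0, pderiv_comm' 2 1] at h0 ⊢
        linear_combination h0
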